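/- arXiv:2501.15866 — 5 statements merged into one kernel-verified Lean document; each statement's English description precedes it below -/
import Mathlib

section
/- Fix q in (0,1) and define f: [0,∞) → ℝ by f(x) = 2x·q^x/(q·(1 − q^x)) for x > 0 and f(0) = −2/(q·ln q). Then f is continuous on [0,∞), strictly decreasing on [0,∞), and f(x) → 0 as x → ∞. -/
/-- f(x) = 2x q^x / (q (1 - q^x)) for x > 0, f(0) = -2/(q ln q). -/
noncomputable def fAux (q : ℝ) (x : ℝ) : ℝ :=
  if x = 0 then -2 / (q * Real.log q)
  else 2 * x * q ^ x / (q * (1 - q ^ x))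

/-- secant slopes of exp from 0 are strictly increasing -/
lemma expSecant {s t : ℝ} (hs : 0 < s) (hst : s < t) :
    (Real.exp s - 1) / s < (Real.exp t - 1) / t := by
  have := strictConvexOn_exp.secant_strict_mono (a := 0) (x := s) (y := t)
    (Set.mem_univ _) (Set.mem_univ _) (Set.mem_univ _) (ne_of_gt hs)
    (ne_of_gt (hs.trans hst)) hst
  simpa using this

theorem fAux_cont_anti_tendsto (q : ℝ) (hq0 : 0 < q) (hq1 : q < 1) :
    ContinuousOn (fAux q) (Set.Ici 0) ∧
      StrictAntiOn (fAux q) (Set.Ici 0) ∧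
      Filter.Tendsto (fAux q) Filter.atTop (nhds 0) := by
  have hlog : Real.log q < 0 := Real.log_neg hq0 hq1
  set c : ℝ := -Real.log q with hc_def
  have hc : 0 < c := by simp only [hc_def]; linarith
  have hqne : q ≠ 0 := ne_of_gt hq0
  -- the smooth formula
  set g : ℝ → ℝ := fun x => 2 / q * (x / (Real.exp (c * x) - 1)) with hg_def
  have hE1 : ∀ x : ℝ, 0 < x → 1 < Real.exp (c * x) := by
    intro x hx
    have h1 : (0 : ℝ) < c * x := mul_pos hc hx
    have := Real.exp_lt_exp.mpr h1
    simpa using this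
  -- fAux agrees with g on positive reals
  have hfg : ∀ x : ℝ, 0 < x → fAux q x = g x := by
    intro x hx
    have hE := hE1 x hx
    have hEne : Real.exp (c * x) ≠ 0 := (Real.exp_pos _).ne'
    have hEs : Real.exp (c * x) - 1 ≠ 0 := ne_of_gt (by linarith)
    have hrpow : q ^ x = (Real.exp (c * x))⁻¹ := by
      rw [Real.rpow_def_of_pos hq0, ← Real.exp_neg]
      rw [hc_def]; ring_nf
    have h1q : 1 - q ^ x ≠ 0 := by
      rw [hrpow]
      have : (Real.exp (c * x))⁻¹ < 1 := inv_lt_one_of_one_lt₀ hE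
      intro h; rw [sub_eq_zero] at h; exact absurd h.symm (ne_of_lt this)
    simp only [fAux, if_neg (ne_of_gt hx), hrpow, hg_def]
    field_simp
  have hf0 : fAux q 0 = 2 / q * c⁻¹ := by
    rw [fAux, if_pos rfl]
    rw [hc_def]
    field_simp
  -- value at 0 dominates positive values
  have hlt0 : ∀ x : ℝ, 0 < x → fAux q x < fAux q 0 := by
    intro x hx
    rw [hfg x hx, hf0, hg_def]
    have hE := hE1 x hx
    have h2q : 0 < 2 / q := by positivity
    refine mul_lt_mul_of_pos_left ?_ h2q
    rw [div_lt_iff₀ (by linarith), inv_mul_eq_div, lt_div_iff₀ hc]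
    have := Real.add_one_lt_exp (ne_of_gt (mul_pos hc hx))
    nlinarith
  -- strict decrease among positive values
  have hlt : ∀ a b : ℝ, 0 < a → a < b → fAux q b < fAux q a := by
    intro a b ha hab
    have hb : 0 < b := ha.trans hab
    rw [hfg a ha, hfg b hb, hg_def]
    have h2q : 0 < 2 / q := by positivity
    refine mul_lt_mul_of_pos_left ?_ h2q
    have hEa := hE1 a ha
    have hEb := hE1 b hb
    have hsec := expSecant (mul_pos hc ha) (by nlinarith : c * a < c * b)
    rw [div_lt_div_iff₀ (mul_pos hc ha) (mul_pos hc hb)] at hsec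
    rw [div_lt_div_iff₀ (by linarith) (by linarith)]
    nlinarith
  have hanti : StrictAntiOn (fAux q) (Set.Ici 0) := by
    intro a ha b hb hab
    rcases eq_or_lt_of_le (Set.mem_Ici.mp ha) with h0 | h0
    · rw [← h0]; exact hlt0 b (by rw [← h0] at hab; exact hab)
    · exact hlt a b h0 hab
  -- limit of g at 0 from the right
  have hslope : Filter.Tendsto (fun x => (Real.exp (c * x) - 1) / x)
      (nhdsWithin 0 {(0:ℝ)}ᶜ) (nhds c) := by
    have hD : HasDerivAt (fun x : ℝ => Real.exp (c * x)) c 0 := by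
      have h1 : HasDerivAt (fun x : ℝ => c * x) c 0 := by
        simpa using (hasDerivAt_id (0:ℝ)).const_mul c
      have h2 := (Real.hasDerivAt_exp (c * 0)).comp 0 h1
      simp at h2; exact h2
    have := hasDerivAt_iff_tendsto_slope.mp hD
    refine this.congr (fun x => ?_)
    simp [slope, Real.exp_zero, div_eq_inv_mul]
  have hlim0 : Filter.Tendsto (fAux q) (nhdsWithin 0 (Set.Ioi 0))
      (nhds (fAux q 0)) := by
    have h1 : Filter.Tendsto (fun x => (Real.exp (c * x) - 1) / x)
        (nhdsWithin 0 (Set.Ioi 0)) (nhds c) :=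
      hslope.mono_left (nhdsWithin_mono 0 (fun x hx => ne_of_gt hx))
    have h2 := (h1.inv₀ (ne_of_gt hc)).const_mul (2 / q)
    rw [hf0]
    refine h2.congr' ?_
    filter_upwards [self_mem_nhdsWithin] with x hx
    rw [hfg x hx, hg_def]
    simp only [inv_div]
  have hcont : ContinuousOn (fAux q) (Set.Ici 0) := by
    intro x hx
    rcases eq_or_lt_of_le (Set.mem_Ici.mp hx) with h0 | h0
    · -- continuity at 0
      rw [← h0]
      rw [ContinuousWithinAt, show Set.Ici (0:ℝ) = insert 0 (Set.Ioi 0) by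
        rw [Set.Ioi_insert], nhdsWithin_insert]
      exact Filter.Tendsto.sup (tendsto_pure_nhds _ _) hlim0
    · -- continuity at positive points
      have hopen : Set.Ioi (0:ℝ) ∈ nhds x := (isOpen_Ioi).mem_nhds h0
      have hgc : ContinuousAt g x := by
        have hE := hE1 x h0
        have hden : Real.exp (c * x) - 1 ≠ 0 := ne_of_gt (by linarith)
        apply ContinuousAt.mul continuousAt_const
        exact (continuousAt_id.div ((Real.continuous_exp.comp
          (continuous_const.mul continuous_id)).continuousAt.sub
          continuousAt_const) hden)
      have : ContinuousAt (fAux q) x := by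
        refine hgc.congr ?_
        filter_upwards [hopen] with y hy
        exact (hfg y hy).symm
      exact this.continuousWithinAt
  refine ⟨hcont, hanti, ?_⟩
  -- tendsto 0 at infinity
  have hbound : ∀ x : ℝ, 1 ≤ x → fAux q x ≤ 2 / q * (4 / (c ^ 2 * x)) := by
    intro x hx
    have hx0 : (0:ℝ) < x := lt_of_lt_of_le one_pos hx
    have hE := hE1 x hx0
    rw [hfg x hx0, hg_def]
    have h2q : 0 ≤ 2 / q := by positivity
    refine mul_le_mul_of_nonneg_left ?_ h2q
    have hquad : (c * x) ^ 2 / 4 ≤ Real.exp (c * x) - 1 := by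
      have h1 : c * x / 2 + 1 ≤ Real.exp (c * x / 2) :=
        Real.add_one_le_exp _
      have h2 : Real.exp (c * x) = Real.exp (c * x / 2) ^ 2 := by
        rw [sq, ← Real.exp_add]; ring_nf
      have h3 : (c * x / 2 + 1) ^ 2 ≤ Real.exp (c * x / 2) ^ 2 := by
        have h0 : 0 ≤ c * x / 2 + 1 := by positivity
        exact pow_le_pow_left₀ h0 h1 2
      nlinarith [mul_pos hc hx0]
    have hd : 0 < (c * x) ^ 2 / 4 := by positivity
    calc x / (Real.exp (c * x) - 1) ≤ x / ((c * x) ^ 2 / 4) :=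
          div_le_div_of_nonneg_left hx0.le hd hquad
      _ = 4 / (c ^ 2 * x) := by field_simp
  have hnonneg : ∀ x : ℝ, 1 ≤ x → 0 ≤ fAux q x := by
    intro x hx
    have hx0 : (0:ℝ) < x := lt_of_lt_of_le one_pos hx
    have hE := hE1 x hx0
    rw [hfg x hx0, hg_def]
    exact mul_nonneg (by positivity) (div_nonneg hx0.le (by linarith))
  have htail : Filter.Tendsto (fun x : ℝ => 2 / q * (4 / (c ^ 2 * x)))
      Filter.atTop (nhds 0) := by
    have h1 : Filter.Tendsto (fun x : ℝ => c ^ 2 * x) Filter.atTop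
        Filter.atTop := Filter.Tendsto.const_mul_atTop (by positivity)
        Filter.tendsto_id
    have h2 := Filter.Tendsto.div_atTop (tendsto_const_nhds
      (x := (4:ℝ))) h1
    have h3 := h2.const_mul (2 / q)
    simpa using h3
  refine tendsto_of_tendsto_of_tendsto_of_le_of_le' tendsto_const_nhds htail
    ?_ ?_
  · filter_upwards [Filter.eventually_ge_atTop (1:ℝ)] with x hx
    exact hnonneg x hx
  · filter_upwards [Filter.eventually_ge_atTop (1:ℝ)] with x hx
    exact hbound x hx
end

section
/- For every q in (0,1), the improper integral ∫₀^∞ (2x·q^x)/(q·(1 − q^x)) dx converges and equals π²/(3·q·(ln q)²). -/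
open MeasureTheory Real

lemma aux_exp_integral {b : ℝ} (hb : 0 < b) :
    IntegrableOn (fun x : ℝ => x * Real.exp (-b * x)) (Set.Ioi 0) ∧
      ∫ x in Set.Ioi (0 : ℝ), x * Real.exp (-b * x) = 1 / b ^ 2 := by
  constructor
  · have h := integrableOn_rpow_mul_exp_neg_mul_rpow (p := 1) (s := 1)
      (by norm_num : (-1 : ℝ) < 1) one_pos hb
    refine h.congr_fun (fun x hx => ?_) measurableSet_Ioi
    simp only [Real.rpow_one]
  · have h := Real.integral_rpow_mul_exp_neg_mul_Ioi (a := 2) (r := b) two_pos hb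
    have heq : Set.EqOn (fun x : ℝ => x ^ ((2 : ℝ) - 1) * Real.exp (-(b * x)))
        (fun x : ℝ => x * Real.exp (-b * x)) (Set.Ioi 0) := by
      intro x hx
      show x ^ ((2 : ℝ) - 1) * Real.exp (-(b * x)) = x * Real.exp (-b * x)
      rw [neg_mul]
      norm_num [Real.rpow_one]
    rw [setIntegral_congr_fun measurableSet_Ioi heq] at h
    rw [h, Real.Gamma_two, mul_one]
    field_simp
    rw [one_div, Real.inv_rpow hb.le, Real.rpow_two, mul_inv_cancel₀ (pow_ne_zero 2 hb.ne')]

lemma aux_basel : HasSum (fun n : ℕ => 1 / ((n : ℝ) + 1) ^ 2) (π ^ 2 / 6) := by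
  have h : HasSum (fun n : ℕ => (1 : ℝ) / ((n + 1 : ℕ) : ℝ) ^ 2) (π ^ 2 / 6) :=
    (hasSum_nat_add_iff (f := fun n : ℕ => (1 : ℝ) / (n : ℝ) ^ 2) 1).mpr
      (by simpa using hasSum_zeta_two)
  convert h using 2 with n
  push_cast
  ring

theorem integral_f (q : ℝ) (hq0 : 0 < q) (hq1 : q < 1) :
    IntegrableOn (fun x : ℝ => 2 * x * q ^ x / (q * (1 - q ^ x))) (Set.Ioi 0) ∧
      ∫ x in Set.Ioi (0 : ℝ), 2 * x * q ^ x / (q * (1 - q ^ x)) =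
        π ^ 2 / (3 * q * Real.log q ^ 2) := by
  have hlogq : Real.log q < 0 := Real.log_neg hq0 hq1
  set c : ℝ := -Real.log q with hc_def
  have hc : 0 < c := by simp only [hc_def]; linarith
  set g : ℝ → ℝ := fun x : ℝ => 2 * x * q ^ x / (q * (1 - q ^ x)) with hg_def
  set F : ℕ → ℝ → ℝ := fun n x => 2 / q * (x * Real.exp (-(((n : ℝ) + 1) * c) * x))
    with hF_def
  -- basic facts about q ^ x
  have hrpow : ∀ x : ℝ, q ^ x = Real.exp (Real.log q * x) := fun x =>
    Real.rpow_def_of_pos hq0 x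
  have hr0 : ∀ x : ℝ, 0 < q ^ x := fun x => Real.rpow_pos_of_pos hq0 x
  have hr1 : ∀ x : ℝ, 0 < x → q ^ x < 1 := by
    intro x hx
    rw [hrpow]
    apply Real.exp_lt_one_iff.mpr
    exact mul_neg_of_neg_of_pos hlogq hx
  -- exponential form of powers of q ^ x
  have hexp : ∀ (n : ℕ) (x : ℝ), Real.exp (-(((n : ℝ) + 1) * c) * x) = (q ^ x) ^ (n + 1) := by
    intro n x
    rw [hrpow, ← Real.exp_nat_mul]
    congr 1
    push_cast
    simp only [hc_def]
    ring
  -- positivity of F on Ioi 0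
  have hFpos : ∀ (n : ℕ) (x : ℝ), 0 < x → 0 < F n x := by
    intro n x hx
    simp only [hF_def]
    positivity
  -- pointwise sum identity on Ioi 0
  have hsum : ∀ x : ℝ, 0 < x → HasSum (fun n => F n x) (g x) := by
    intro x hx
    have h0 := hr0 x
    have h1 := hr1 x hx
    have hgeo : HasSum (fun n : ℕ => (q ^ x) ^ n) (1 - q ^ x)⁻¹ :=
      hasSum_geometric_of_lt_one h0.le h1
    have h2 : HasSum (fun n : ℕ => (2 / q * (x * q ^ x)) * (q ^ x) ^ n)
        ((2 / q * (x * q ^ x)) * (1 - q ^ x)⁻¹) := hgeo.mul_left _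
    have heq : (fun n : ℕ => (2 / q * (x * q ^ x)) * (q ^ x) ^ n) = fun n => F n x := by
      funext n
      simp only [hF_def, hexp n x, pow_succ]
      ring
    rw [heq] at h2
    convert h2 using 1
    simp only [hg_def]
    have hne : 1 - q ^ x ≠ 0 := by linarith
    field_simp
  -- integrability and integral of each F n
  have hb : ∀ n : ℕ, (0 : ℝ) < ((n : ℝ) + 1) * c := by
    intro n
    positivity
  have hFint : ∀ n : ℕ, IntegrableOn (F n) (Set.Ioi 0) := by
    intro n
    exact ((aux_exp_integral (hb n)).1).const_mul _
  have hFval : ∀ n : ℕ, ∫ x in Set.Ioi (0 : ℝ), F n x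
      = 2 / q * (1 / (((n : ℝ) + 1) * c) ^ 2) := by
    intro n
    simp only [hF_def]
    rw [MeasureTheory.integral_const_mul, (aux_exp_integral (hb n)).2]
  -- summability of the integrals
  have hvals : ∀ n : ℕ, 2 / q * (1 / (((n : ℝ) + 1) * c) ^ 2)
      = (2 / (q * c ^ 2)) * (1 / ((n : ℝ) + 1) ^ 2) := by
    intro n
    have h1 : ((n : ℝ) + 1) ≠ 0 := by positivity
    field_simp
  have hSum : HasSum (fun n : ℕ => 2 / q * (1 / (((n : ℝ) + 1) * c) ^ 2))
      ((2 / (q * c ^ 2)) * (π ^ 2 / 6)) := by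
    have hfe : (fun n : ℕ => 2 / q * (1 / (((n : ℝ) + 1) * c) ^ 2))
        = fun n : ℕ => (2 / (q * c ^ 2)) * (1 / ((n : ℝ) + 1) ^ 2) := funext hvals
    rw [hfe]
    exact aux_basel.mul_left _
  -- the target value
  have htarget : (2 / (q * c ^ 2)) * (π ^ 2 / 6) = π ^ 2 / (3 * q * Real.log q ^ 2) := by
    have hc2 : c ^ 2 = Real.log q ^ 2 := by rw [hc_def, neg_sq]
    rw [hc2]
    have h1 : Real.log q ≠ 0 := ne_of_lt hlogq
    field_simp
    ring
  -- measurability of g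
  have hqx_cont : Continuous (fun x : ℝ => q ^ x) := by
    rw [funext hrpow]; fun_prop
  have hgpos : ∀ x : ℝ, 0 < x → 0 < g x := by
    intro x hx
    have := hr0 x
    have := hr1 x hx
    simp only [hg_def]
    have h1 : 0 < 2 * x * q ^ x := by positivity
    have h2 : 0 < q * (1 - q ^ x) := by
      apply mul_pos hq0; linarith
    exact div_pos h1 h2
  have hgcont : ContinuousOn g (Set.Ioi 0) := by
    apply ContinuousOn.div
    · exact (Continuous.mul (by fun_prop) hqx_cont).continuousOn
    · exact (Continuous.mul continuous_const (by fun_prop)).continuousOn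
    · intro x hx
      have := hr1 x hx
      have h2 : 0 < q * (1 - q ^ x) := mul_pos hq0 (by linarith)
      exact ne_of_gt h2
  have hgmeas : AEStronglyMeasurable g (volume.restrict (Set.Ioi 0)) :=
    hgcont.aestronglyMeasurable measurableSet_Ioi
  have hgnn : 0 ≤ᵐ[volume.restrict (Set.Ioi 0)] g :=
    (ae_restrict_iff' measurableSet_Ioi).mpr (ae_of_all _ fun x hx => (hgpos x hx).le)
  have hFcont : ∀ n : ℕ, Continuous (F n) := by
    intro n
    simp only [hF_def]
    fun_prop
  have hFnn : ∀ n : ℕ, 0 ≤ᵐ[volume.restrict (Set.Ioi 0)] F n := fun n =>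
    (ae_restrict_iff' measurableSet_Ioi).mpr (ae_of_all _ fun x hx => (hFpos n x hx).le)
  -- the lintegral computation
  have hlin : ∫⁻ x in Set.Ioi (0 : ℝ), ENNReal.ofReal (g x)
      = ENNReal.ofReal ((2 / (q * c ^ 2)) * (π ^ 2 / 6)) := by
    calc ∫⁻ x in Set.Ioi (0 : ℝ), ENNReal.ofReal (g x)
        = ∫⁻ x in Set.Ioi (0 : ℝ), ∑' n, ENNReal.ofReal (F n x) := by
          apply lintegral_congr_ae
          filter_upwards [ae_restrict_mem measurableSet_Ioi] with x hx
          rw [← (hsum x hx).tsum_eq,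
            ENNReal.ofReal_tsum_of_nonneg (fun n => (hFpos n x hx).le) (hsum x hx).summable]
      _ = ∑' n, ∫⁻ x in Set.Ioi (0 : ℝ), ENNReal.ofReal (F n x) := by
          apply lintegral_tsum
          intro n
          exact ((hFcont n).measurable.ennreal_ofReal).aemeasurable
      _ = ∑' n, ENNReal.ofReal (∫ x in Set.Ioi (0 : ℝ), F n x) := by
          refine tsum_congr fun n => ?_
          rw [MeasureTheory.ofReal_integral_eq_lintegral_ofReal (hFint n) (hFnn n)]
      _ = ENNReal.ofReal ((2 / (q * c ^ 2)) * (π ^ 2 / 6)) := by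
          simp_rw [hFval]
          rw [← ENNReal.ofReal_tsum_of_nonneg (fun n => by positivity) hSum.summable,
            hSum.tsum_eq]
  have hgint : IntegrableOn g (Set.Ioi 0) := by
    refine ⟨hgmeas, ?_⟩
    rw [hasFiniteIntegral_iff_ofReal hgnn, hlin]
    exact ENNReal.ofReal_lt_top
  refine ⟨hgint, ?_⟩
  -- compute the integral via termwise integration
  have hnormint : ∀ n : ℕ, ∫ x in Set.Ioi (0 : ℝ), ‖F n x‖
      = ∫ x in Set.Ioi (0 : ℝ), F n x := fun n =>
    integral_congr_ae ((ae_restrict_iff' measurableSet_Ioi).mpr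
      (ae_of_all _ fun x hx => Real.norm_of_nonneg (hFpos n x hx).le))
  have hnorm_summable : Summable fun n => ∫ x in Set.Ioi (0 : ℝ), ‖F n x‖ := by
    refine hSum.summable.congr fun n => ?_
    rw [hnormint n, hFval n]
  have key := MeasureTheory.integral_tsum_of_summable_integral_norm
    (μ := volume.restrict (Set.Ioi 0)) hFint hnorm_summable
  have htsum_eq : ∫ x in Set.Ioi (0 : ℝ), (∑' n, F n x) = ∫ x in Set.Ioi (0 : ℝ), g x := by
    refine setIntegral_congr_fun measurableSet_Ioi fun x hx => ?_
    exact (hsum x hx).tsum_eq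
  have hfinal : ∫ x in Set.Ioi (0 : ℝ), g x = (2 / (q * c ^ 2)) * (π ^ 2 / 6) := by
    rw [← htsum_eq, ← key]
    simp_rw [hFval]
    exact hSum.tsum_eq
  rw [hfinal, htarget]
end

section
/- For every q in (0,1), the sum Σ_{m=1}^∞ 2m·q^{m-1}/(1 − q^m) converges and is at most π²/(3·q·(ln q)²). -/
open Real

/-- Key pointwise inequality: for `t > 0`, `t ≤ 2 sinh (t/2)`, hence
`exp (-t) / (1 - exp (-t))^2 ≤ 1 / t^2`. -/
lemma exp_div_one_sub_exp_sq_le (t : ℝ) (ht : 0 < t) :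
    Real.exp (-t) / (1 - Real.exp (-t)) ^ 2 ≤ 1 / t ^ 2 := by
  have hlt : Real.exp (-t) < 1 := by
    rw [Real.exp_lt_one_iff]; linarith
  have h1 : 0 < 1 - Real.exp (-t) := by linarith
  have hsinh : t / 2 < Real.sinh (t / 2) := self_lt_sinh_iff.2 (by linarith)
  have e1 : Real.exp (-t / 2) * Real.exp (t / 2) = 1 := by
    rw [← Real.exp_add, show -t / 2 + t / 2 = (0:ℝ) by ring, Real.exp_zero]
  have e2 : Real.exp (-t / 2) * Real.exp (-(t / 2)) = Real.exp (-t) := by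
    rw [← Real.exp_add]; ring_nf
  have hkey : t * Real.exp (-t / 2) ≤ 1 - Real.exp (-t) := by
    have heq : 1 - Real.exp (-t) = Real.exp (-t / 2) * (2 * Real.sinh (t / 2)) := by
      rw [Real.sinh_eq]
      linear_combination e2 - e1
    rw [heq]
    have := Real.exp_pos (-t / 2)
    nlinarith
  have hsq : t ^ 2 * Real.exp (-t) ≤ (1 - Real.exp (-t)) ^ 2 := by
    have h2 : (t * Real.exp (-t / 2)) ^ 2 ≤ (1 - Real.exp (-t)) ^ 2 := by
      apply pow_le_pow_left₀ (by positivity) hkey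
    calc t ^ 2 * Real.exp (-t) = (t * Real.exp (-t / 2)) ^ 2 := by
          rw [mul_pow]
          have : Real.exp (-t / 2) ^ 2 = Real.exp (-t) := by
            rw [sq, ← Real.exp_add]; ring_nf
          rw [this]
      _ ≤ (1 - Real.exp (-t)) ^ 2 := h2
  rw [div_le_div_iff₀ (by positivity) (by positivity)]
  nlinarith [Real.exp_pos (-t)]

/-- Σ_{m≥1} 2m q^{m-1}/(1-q^m), written with m = k+1, k ≥ 0. -/
theorem sum_S_bound (q : ℝ) (hq0 : 0 < q) (hq1 : q < 1) :
    Summable (fun k : ℕ => 2 * (k + 1 : ℝ) * q ^ k / (1 - q ^ (k + 1))) ∧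
      ∑' k : ℕ, 2 * (k + 1 : ℝ) * q ^ k / (1 - q ^ (k + 1)) ≤
        π ^ 2 / (3 * q * Real.log q ^ 2) := by
  set L : ℝ := -Real.log q with hLdef
  have hlogneg : Real.log q < 0 := Real.log_neg hq0 hq1
  have hL : 0 < L := by simp only [hLdef]; linarith
  have hqpow : ∀ n : ℕ, q ^ (n + 1) < 1 := fun n => pow_lt_one₀ hq0.le hq1 n.succ_ne_zero
  have hqpow0 : ∀ n : ℕ, 0 < q ^ (n + 1) := fun n => pow_pos hq0 _
  have hden : ∀ n : ℕ, 0 < 1 - q ^ (n + 1) := fun n => by linarith [hqpow n]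
  have hqexp : ∀ n : ℕ, q ^ (n + 1) = Real.exp (-((n + 1 : ℝ) * L)) := by
    intro n
    rw [← Real.exp_log hq0, ← Real.exp_nat_mul]
    congr 1
    simp only [hLdef]
    push_cast
    ring
  have hterm : ∀ j : ℕ, q ^ (j + 1) / (1 - q ^ (j + 1)) ^ 2 ≤ 1 / ((j + 1 : ℝ) * L) ^ 2 := by
    intro j
    rw [hqexp j]
    exact exp_div_one_sub_exp_sq_le _ (by positivity)
  -- Summability of the main series
  have ha : Summable (fun k : ℕ => 2 * (k + 1 : ℝ) * q ^ k / (1 - q ^ (k + 1))) := by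
    have hb : Summable (fun k : ℕ => 2 * (k + 1 : ℝ) * q ^ k / (1 - q)) := by
      have h1 : Summable (fun k : ℕ => (k : ℝ) * q ^ k) :=
        (hasSum_coe_mul_geometric_of_norm_lt_one
          (by rw [Real.norm_eq_abs, abs_of_pos hq0]; exact hq1)).summable
      have h2 : Summable (fun k : ℕ => (q : ℝ) ^ k) := summable_geometric_of_lt_one hq0.le hq1
      have := (h1.add h2).mul_right (2 / (1 - q))
      apply this.congr
      intro k
      field_simp
    apply Summable.of_nonneg_of_le _ _ hb
    · intro k
      have := hden k
      positivity
    · intro k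
      have hqk : q ^ (k + 1) ≤ q := by
        calc q ^ (k + 1) ≤ q ^ 1 := pow_le_pow_of_le_one hq0.le hq1.le (by omega)
          _ = q := pow_one q
      gcongr <;> linarith
  refine ⟨ha, ?_⟩
  -- double-sum representation
  set F : ℕ × ℕ → ℝ := fun p => 2 * (p.1 + 1 : ℝ) * q ^ ((p.1 + 1) * (p.2 + 1)) with hFdef
  have hF0 : ∀ p, 0 ≤ F p := fun p => by positivity
  have hpowsplit : ∀ m j : ℕ, q ^ ((m + 1) * (j + 1)) = q ^ (m + 1) * (q ^ (m + 1)) ^ j := by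
    intro m j
    rw [← pow_mul, ← pow_add]
    congr 1
    ring
  -- inner sums over j (fixed m)
  have hinner : ∀ m : ℕ, HasSum (fun j => F (m, j))
      (q * (2 * (m + 1 : ℝ) * q ^ m / (1 - q ^ (m + 1)))) := by
    intro m
    have hgeo : HasSum (fun j : ℕ => (q ^ (m + 1)) ^ j) (1 / (1 - q ^ (m + 1))) := by
      simpa [one_div] using hasSum_geometric_of_lt_one (hqpow0 m).le (hqpow m)
    have h2 := hgeo.mul_left (2 * (m + 1 : ℝ) * q ^ (m + 1))
    have heq : (fun j : ℕ => 2 * (m + 1 : ℝ) * q ^ (m + 1) * (q ^ (m + 1)) ^ j)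
        = fun j => F (m, j) := by
      funext j
      simp only [hFdef]
      rw [hpowsplit m j]
      ring
    rw [heq] at h2
    suffices hval : q * (2 * (m + 1 : ℝ) * q ^ m / (1 - q ^ (m + 1))) = 2 * (m + 1 : ℝ) * q ^ (m + 1) * (1 / (1 - q ^ (m + 1))) by rw [hval]; exact h2
    have hne := (hden m).ne'
    rw [pow_succ]
    field_simp
  -- Summability of F
  have hFsum : Summable F := by
    rw [summable_prod_of_nonneg hF0]
    refine ⟨fun m => (hinner m).summable, ?_⟩
    apply (ha.mul_left q).congr
    intro m
    exact ((hinner m).tsum_eq).symm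
  -- tsum F = q * S
  have htsum1 : ∑' p : ℕ × ℕ, F p
      = q * ∑' k : ℕ, 2 * (k + 1 : ℝ) * q ^ k / (1 - q ^ (k + 1)) := by
    rw [Summable.tsum_prod hFsum, ← tsum_mul_left]
    exact tsum_congr fun m => (hinner m).tsum_eq
  -- swapped inner sums over m (fixed j)
  have hswap : ∀ j : ℕ, HasSum (fun m => F (m, j))
      (2 * (q ^ (j + 1) / (1 - q ^ (j + 1)) ^ 2)) := by
    intro j
    set r : ℝ := q ^ (j + 1) with hrdef
    have hr0 : 0 < r := hqpow0 j
    have hr1 : r < 1 := hqpow j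
    have hnr : ‖r‖ < 1 := by rw [Real.norm_eq_abs, abs_of_pos hr0]; exact hr1
    have hbase : HasSum (fun n : ℕ => (n : ℝ) * r ^ n) (r / (1 - r) ^ 2) :=
      hasSum_coe_mul_geometric_of_norm_lt_one hnr
    have hshift : HasSum (fun m : ℕ => ((m + 1 : ℕ) : ℝ) * r ^ (m + 1))
        (r / (1 - r) ^ 2) := by
      have h := (hasSum_nat_add_iff' (f := fun n : ℕ => (n : ℝ) * r ^ n) 1).2 hbase
      simpa using h
    have heq : (fun m : ℕ => 2 * (((m + 1 : ℕ) : ℝ) * r ^ (m + 1))) = fun m => F (m, j) := by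
      funext m
      simp only [hFdef]
      rw [hrdef, ← pow_mul]
      push_cast
      ring
    rw [← heq]
    exact hshift.mul_left 2
  -- the comparison series (Basel problem)
  have hbasel : HasSum (fun j : ℕ => (1 : ℝ) / ((j : ℝ) + 1) ^ 2) (π ^ 2 / 6) := by
    have h := (hasSum_nat_add_iff' (f := fun n : ℕ => (1 : ℝ) / (n : ℝ) ^ 2) 1).2 hasSum_zeta_two
    simpa using h
  have hcompsum : HasSum (fun j : ℕ => 2 / L ^ 2 * ((1 : ℝ) / ((j : ℝ) + 1) ^ 2))
      (2 / L ^ 2 * (π ^ 2 / 6)) := hbasel.mul_left _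
  -- termwise bound for the swapped outer sum
  have hpt : ∀ j : ℕ, 2 * (q ^ (j + 1) / (1 - q ^ (j + 1)) ^ 2)
      ≤ 2 / L ^ 2 * ((1 : ℝ) / ((j : ℝ) + 1) ^ 2) := by
    intro j
    have h := hterm j
    have hrw : 1 / ((j + 1 : ℝ) * L) ^ 2 = 1 / L ^ 2 * (1 / ((j : ℝ) + 1) ^ 2) := by
      rw [mul_pow]
      field_simp
    rw [hrw] at h
    calc 2 * (q ^ (j + 1) / (1 - q ^ (j + 1)) ^ 2)
        ≤ 2 * (1 / L ^ 2 * (1 / ((j : ℝ) + 1) ^ 2)) := by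
          apply mul_le_mul_of_nonneg_left h (by norm_num)
      _ = 2 / L ^ 2 * (1 / ((j : ℝ) + 1) ^ 2) := by ring
  have hlhs_sum : Summable (fun j : ℕ => 2 * (q ^ (j + 1) / (1 - q ^ (j + 1)) ^ 2)) := by
    apply Summable.of_nonneg_of_le _ hpt hcompsum.summable
    intro j
    have := hden j
    positivity
  -- swapped representation of tsum F
  have htsum2 : ∑' p : ℕ × ℕ, F p = ∑' j : ℕ, 2 * (q ^ (j + 1) / (1 - q ^ (j + 1)) ^ 2) := by
    rw [← (Equiv.prodComm ℕ ℕ).tsum_eq F]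
    have hG : Summable (fun a : ℕ × ℕ => F ((Equiv.prodComm ℕ ℕ) a)) :=
      hFsum.comp_injective (Equiv.prodComm ℕ ℕ).injective
    rw [Summable.tsum_prod hG]
    exact tsum_congr fun j => (hswap j).tsum_eq
  -- combine
  have hle : ∑' j : ℕ, 2 * (q ^ (j + 1) / (1 - q ^ (j + 1)) ^ 2) ≤ 2 / L ^ 2 * (π ^ 2 / 6) := by
    rw [← hcompsum.tsum_eq]
    exact Summable.tsum_le_tsum hpt hlhs_sum hcompsum.summable
  have hmain : q * (∑' k : ℕ, 2 * (k + 1 : ℝ) * q ^ k / (1 - q ^ (k + 1)))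
      ≤ π ^ 2 / (3 * L ^ 2) := by
    rw [← htsum1, htsum2]
    calc ∑' j : ℕ, 2 * (q ^ (j + 1) / (1 - q ^ (j + 1)) ^ 2)
        ≤ 2 / L ^ 2 * (π ^ 2 / 6) := hle
      _ = π ^ 2 / (3 * L ^ 2) := by
          rw [eq_div_iff (by positivity)]
          field_simp
          ring
  have hLsq : L ^ 2 = Real.log q ^ 2 := by rw [hLdef]; ring
  rw [← hLsq]
  have hmul : (∑' k : ℕ, 2 * (k + 1 : ℝ) * q ^ k / (1 - q ^ (k + 1))) * q
      ≤ π ^ 2 / (3 * L ^ 2) := by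
    rw [mul_comm]; exact hmain
  have hfin := (le_div_iff₀ hq0).2 hmul
  calc ∑' k : ℕ, 2 * (k + 1 : ℝ) * q ^ k / (1 - q ^ (k + 1))
      ≤ π ^ 2 / (3 * L ^ 2) / q := hfin
    _ = π ^ 2 / (3 * q * L ^ 2) := by
        rw [div_div]
        ring_nf
end

section
/- Let ρ₀ = 2^{11/2}. For every q in [0.3, 0.5], the inequality q³ − q⁶(1+q²)/((1−q²)(1−q⁴)) − 1/ρ₀² − 2^{−9/2}·(2q³/(1−q²)) > 0 holds. -/
theorem key_numerical_inequality (q : ℝ) (hq : q ∈ Set.Icc (0.3 : ℝ) 0.5) :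
    0 < q ^ 3 - q ^ 6 * (1 + q ^ 2) / ((1 - q ^ 2) * (1 - q ^ 4)) -
        1 / ((2 : ℝ) ^ ((11 : ℝ) / 2)) ^ 2 -
        (2 : ℝ) ^ (-(9 : ℝ) / 2) * (2 * q ^ 3 / (1 - q ^ 2)) := by
  obtain ⟨hq1, hq2⟩ := hq
  have h1 : ((2:ℝ) ^ ((11:ℝ)/2)) ^ 2 = 2048 := by
    rw [← Real.rpow_natCast ((2:ℝ) ^ ((11:ℝ)/2)) 2, ← Real.rpow_mul (by norm_num)]
    norm_num
  have h2' : (0:ℝ) ≤ (2:ℝ) ^ (-(9:ℝ)/2) := Real.rpow_nonneg (by norm_num) _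
  have h2 : (2:ℝ) ^ (-(9:ℝ)/2) ≤ 0.0443 := by
    have h22 : (22.6:ℝ) ≤ (2:ℝ) ^ ((9:ℝ)/2) := by
      have hsq : ((22.6:ℝ))^2 ≤ ((2:ℝ) ^ ((9:ℝ)/2))^2 := by
        rw [← Real.rpow_natCast ((2:ℝ) ^ ((9:ℝ)/2)) 2, ← Real.rpow_mul (by norm_num)]
        norm_num
      nlinarith [Real.rpow_nonneg (show (0:ℝ) ≤ 2 by norm_num) ((9:ℝ)/2)]
    rw [show (-(9:ℝ)/2) = -((9:ℝ)/2) by ring, Real.rpow_neg (by norm_num)]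
    rw [inv_le_comm₀ (by positivity) (by norm_num)]
    calc (0.0443:ℝ)⁻¹ ≤ 22.6 := by norm_num
      _ ≤ _ := h22
  have hd1 : (0.75:ℝ) ≤ 1 - q^2 := by nlinarith
  have hd4 : (0.9375:ℝ) ≤ 1 - q^4 := by nlinarith
  have hD : (0.703125:ℝ) ≤ (1 - q^2) * (1 - q^4) := by nlinarith
  have hq0 : (0:ℝ) < q := by linarith [show (0.3:ℝ) ≤ q from hq1]
  have hN : q^6 * (1 + q^2) / ((1 - q^2) * (1 - q^4)) ≤ q^6 * (1 + q^2) / 0.703125 := by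
    apply div_le_div_of_nonneg_left (by positivity) (by norm_num) hD
  have hF : 2 * q^3 / (1 - q^2) ≤ 2 * q^3 / 0.75 := by
    apply div_le_div_of_nonneg_left (by positivity) (by norm_num) hd1
  have hM : (2:ℝ) ^ (-(9:ℝ)/2) * (2 * q^3 / (1 - q^2)) ≤ 0.0443 * (2 * q^3 / 0.75) := by
    apply mul_le_mul h2 hF (by positivity) (by norm_num)
  have hc3 : (0.027:ℝ) ≤ q^3 := by nlinarith
  have ha : q^3 ≤ 0.125 := by nlinarith
  have hb : q^2 ≤ 0.25 := by nlinarith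
  have h6 : q^3 * q^3 ≤ q^3 * 0.125 :=
    mul_le_mul_of_nonneg_left ha (pow_pos hq0 3).le
  have hN' : q^6 * (1 + q^2) / 0.703125 ≤ 0.2223 * q^3 := by
    rw [div_le_iff₀ (by norm_num)]
    nlinarith [pow_pos hq0 3, pow_pos hq0 6, mul_le_mul_of_nonneg_left hb (pow_pos hq0 6).le]
  have hM' : (0.0443:ℝ) * (2 * q^3 / 0.75) ≤ 0.11814 * q^3 := by
    rw [show (0.0443:ℝ) * (2 * q^3 / 0.75) = (443/3750) * q^3 by ring]
    nlinarith [pow_pos hq0 3]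
  rw [h1]
  linarith [hN, hM, hN', hM', hc3]
end

section
/- For q ∈ (0,1) and real y, writing v = q⁴ and x = iy, the partial theta function satisfies Re θ(q, iy) = θ(v, −v^{−1/4}·y²) and Im θ(q, iy) = v^{1/4}·y·θ(v, −v^{1/4}·y²). -/
open Complex Filter

/-- The partial theta function θ(q,x) = Σ_{j≥0} q^{j(j+1)/2} x^j, complex argument. -/
noncomputable def partialTheta (q : ℝ) (x : ℂ) : ℂ :=
  ∑' j : ℕ, (q : ℂ) ^ (j * (j + 1) / 2) * x ^ j

/-- The real partial theta function. -/
noncomputable def partialThetaR (q x : ℝ) : ℝ :=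
  ∑' j : ℕ, q ^ (j * (j + 1) / 2) * x ^ j

lemma summable_theta (q : ℝ) (hq0 : 0 < q) (hq1 : q < 1) (y : ℝ) :
    Summable (fun j : ℕ => (q : ℂ) ^ (j * (j + 1) / 2) * (Complex.I * (y : ℂ)) ^ j) := by
  apply summable_of_ratio_norm_eventually_le (r := 1/2) (by norm_num)
  have ht : Tendsto (fun n : ℕ => q ^ (n + 1) * |y|) atTop (nhds 0) := by
    have := (tendsto_pow_atTop_nhds_zero_of_lt_one hq0.le hq1).comp
      (tendsto_add_atTop_nat 1)
    simpa using this.mul_const |y|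
  filter_upwards [ht.eventually_le_const (by norm_num : (0:ℝ) < 1/2)] with n hn
  have hnorm : ∀ m : ℕ, ‖(q : ℂ) ^ (m * (m + 1) / 2) * (Complex.I * (y : ℂ)) ^ m‖
      = q ^ (m * (m + 1) / 2) * |y| ^ m := by
    intro m
    simp [norm_mul, norm_pow, Complex.norm_real, abs_of_pos hq0, Real.norm_eq_abs]
  rw [hnorm, hnorm]
  have hexp : (n + 1) * (n + 1 + 1) / 2 = n * (n + 1) / 2 + (n + 1) := by
    obtain ⟨m, hm⟩ := Nat.even_mul_succ_self n
    have h2 : (n + 1) * (n + 1 + 1) = n * (n + 1) + 2 * (n + 1) := by ring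
    omega
  rw [hexp, pow_add, pow_succ]
  calc q ^ (n * (n + 1) / 2) * q ^ (n + 1) * (|y| ^ n * |y|)
      = (q ^ (n+1) * |y|) * (q ^ (n * (n + 1) / 2) * |y| ^ n) := by ring
    _ ≤ (1/2) * (q ^ (n * (n + 1) / 2) * |y| ^ n) := by
        apply mul_le_mul_of_nonneg_right hn
        positivity

lemma exp_even (k : ℕ) : 2 * k * (2 * k + 1) / 2 = k * (2 * k + 1) := by
  rw [show 2 * k * (2 * k + 1) = 2 * (k * (2 * k + 1)) by ring]
  omega

lemma exp_odd (k : ℕ) : (2 * k + 1) * ((2 * k + 1) + 1) / 2 = (2 * k + 1) * (k + 1) := by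
  rw [show (2 * k + 1) * ((2 * k + 1) + 1) = 2 * ((2 * k + 1) * (k + 1)) by ring]
  omega

lemma exp_four (k : ℕ) : 4 * (k * (k + 1) / 2) = k * (2 * k + 1) + k := by
  obtain ⟨m, hm⟩ := Nat.even_mul_succ_self k
  have h2 : k * (2 * k + 1) + k = 2 * (k * (k + 1)) := by ring
  omega


theorem theta_re_im_on_imaginary_axis (q : ℝ) (hq0 : 0 < q) (hq1 : q < 1) (y : ℝ) :
    (partialTheta q (Complex.I * (y : ℂ))).re =
        partialThetaR (q ^ 4) (-(q ^ 4 : ℝ) ^ (-(1 : ℝ) / 4) * y ^ 2) ∧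
      (partialTheta q (Complex.I * (y : ℂ))).im =
        (q ^ 4 : ℝ) ^ ((1 : ℝ) / 4) * y *
          partialThetaR (q ^ 4) (-(q ^ 4 : ℝ) ^ ((1 : ℝ) / 4) * y ^ 2) := by
  have hqne : q ≠ 0 := hq0.ne'
  have hr1 : ((q ^ 4 : ℝ)) ^ (-(1 : ℝ) / 4) = q⁻¹ := by
    rw [← Real.rpow_natCast q 4, ← Real.rpow_mul hq0.le]
    norm_num
    exact Real.rpow_neg_one q
  have hr2 : ((q ^ 4 : ℝ)) ^ ((1 : ℝ) / 4) = q := by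
    rw [← Real.rpow_natCast q 4, ← Real.rpow_mul hq0.le]
    norm_num
  have hsum := summable_theta q hq0 hq1 y
  have hIsq : (Complex.I * (y : ℂ)) ^ 2 = ((-(y ^ 2) : ℝ) : ℂ) := by
    push_cast
    rw [mul_pow, Complex.I_sq]
    ring
  have hfe : ∀ k : ℕ, (q : ℂ) ^ (2 * k * (2 * k + 1) / 2) * (Complex.I * (y : ℂ)) ^ (2 * k)
      = ((q ^ (k * (2 * k + 1)) * (-(y ^ 2)) ^ k : ℝ) : ℂ) := by
    intro k
    rw [exp_even, pow_mul (Complex.I * (y : ℂ)) 2 k, hIsq]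
    push_cast
    ring
  have hfo : ∀ k : ℕ, (q : ℂ) ^ ((2 * k + 1) * (2 * k + 1 + 1) / 2)
        * (Complex.I * (y : ℂ)) ^ (2 * k + 1)
      = Complex.I * ((q ^ ((2 * k + 1) * (k + 1)) * y * (-(y ^ 2)) ^ k : ℝ) : ℂ) := by
    intro k
    rw [exp_odd, pow_succ, pow_mul (Complex.I * (y : ℂ)) 2 k, hIsq]
    push_cast
    ring
  -- summability of component series
  have hre : Summable fun j : ℕ =>
      ((q : ℂ) ^ (j * (j + 1) / 2) * (Complex.I * (y : ℂ)) ^ j).re :=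
    (Complex.hasSum_re hsum.hasSum).summable
  have him : Summable fun j : ℕ =>
      ((q : ℂ) ^ (j * (j + 1) / 2) * (Complex.I * (y : ℂ)) ^ j).im :=
    (Complex.hasSum_im hsum.hasSum).summable
  have hinj2 : Function.Injective (fun k : ℕ => 2 * k) := fun a b h => by dsimp at h; omega
  have hinj2' : Function.Injective (fun k : ℕ => 2 * k + 1) := fun a b h => by dsimp at h; omega
  have hree := hre.comp_injective hinj2
  have hreo := hre.comp_injective hinj2'
  have hime := him.comp_injective hinj2
  have himo := him.comp_injective hinj2'
  constructor
  · unfold partialTheta partialThetaR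
    rw [Complex.re_tsum hsum]
    rw [hr1]
    rw [← tsum_even_add_odd (f := fun j : ℕ =>
      ((q:ℂ) ^ (j*(j+1)/2) * (Complex.I*(y:ℂ))^j).re) hree hreo]
    have h0 : ∀ k : ℕ, ((q : ℂ) ^ ((2*k+1) * (2*k+1 + 1) / 2)
        * (Complex.I * (y : ℂ)) ^ (2*k+1)).re = 0 := by
      intro k
      rw [hfo k]
      simp [Complex.mul_re, ← Complex.ofReal_pow, ← Complex.ofReal_neg]
    rw [(tsum_congr h0).trans tsum_zero, add_zero]
    refine tsum_congr fun k => ?_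
    rw [hfe k, Complex.ofReal_re, ← pow_mul, exp_four, pow_add,
      show -q⁻¹ * y ^ 2 = -(y ^ 2) * q⁻¹ by ring, mul_pow, inv_pow]
    field_simp
  · unfold partialTheta partialThetaR
    rw [Complex.im_tsum hsum]
    rw [hr2]
    rw [← tsum_even_add_odd (f := fun j : ℕ =>
      ((q:ℂ) ^ (j*(j+1)/2) * (Complex.I*(y:ℂ))^j).im) hime himo]
    have h0 : ∀ k : ℕ, ((q : ℂ) ^ ((2*k) * (2*k + 1) / 2)
        * (Complex.I * (y : ℂ)) ^ (2*k)).im = 0 := by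
      intro k
      rw [hfe k, Complex.ofReal_im]
    rw [(tsum_congr h0).trans tsum_zero, zero_add, ← tsum_mul_left]
    refine tsum_congr fun k => ?_
    rw [hfo k]
    simp only [Complex.mul_im, Complex.I_re, Complex.I_im, Complex.ofReal_re,
      Complex.ofReal_im, one_mul, zero_mul, add_zero, mul_zero, zero_add]
    rw [← pow_mul, exp_four, pow_add,
      show -q * y ^ 2 = -(y ^ 2) * q by ring, mul_pow,
      show (2*k+1) * (k+1) = (k * (2*k+1) + 2*k) + 1 by ring, pow_succ, pow_add]
    ring
end
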